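/- arXiv:0811.3543 — 3 statements merged into one kernel-verified Lean document; each statement's English description precedes it below -/
import Mathlib

section
/- For every ε > 0 and every i ∈ ℤ^d, the one-site decoupled map Φ_{ε,i} makes the coordinate x_i independent of the other coordinates: (Φ_{ε,i}(x))_i = x_i for all x ∈ X, and whenever x, y ∈ X satisfy x_k = y_k for all k ≠ i, then (Φ_{ε,i}(x))_k = (Φ_{ε,i}(y))_k for all k ≠ i. -/
open MeasureTheory Set Filter

abbrev Site (d : ℕ) : Type := Fin d → ℤ

abbrev XX (d : ℕ) : Type := Site d → Set.Icc (0:ℝ) 1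

def VFinset (d : ℕ) : Finset (Site d) :=
  (Finset.univ.image fun j : Fin d => (Pi.single j 1 : Site d)) ∪
    (Finset.univ.image fun j : Fin d => -(Pi.single j 1 : Site d))

def DependsOnFn (d : ℕ) (φ : XX d → ℝ) (Λ : Finset (Site d)) : Prop :=
  ∀ x y : XX d, (∀ i ∈ Λ, x i = y i) → φ x = φ y

noncomputable def xslice (d : ℕ) (φ : XX d → ℝ) (i : Site d) (x : XX d) : ℝ → ℝ :=
  fun t => φ (Function.update x i (Set.projIcc (0:ℝ) 1 zero_le_one t))

def LocalC1 (d : ℕ) (φ : XX d → ℝ) : Prop :=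
  (∃ Λ : Finset (Site d), DependsOnFn d φ Λ) ∧
    ∀ (i : Site d) (x : XX d), ContDiffOn ℝ 1 (xslice d φ i x) (Set.Icc 0 1)

noncomputable def pd (d : ℕ) (φ : XX d → ℝ) (i : Site d) (x : XX d) : ℝ :=
  derivWithin (xslice d φ i x) (Set.Icc 0 1) (↑(x i))

def HasPD (d : ℕ) (φ : XX d → ℝ) (i : Site d) (x : XX d) : Prop :=
  DifferentiableWithinAt ℝ (xslice d φ i x) (Set.Icc 0 1) (↑(x i))

noncomputable def sint {α : Type*} [MeasurableSpace α] (μ : SignedMeasure α) (f : α → ℝ) : ℝ :=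
  (∫ x, f x ∂μ.toJordanDecomposition.posPart) - ∫ x, f x ∂μ.toJordanDecomposition.negPart

noncomputable def sintOn {α : Type*} [MeasurableSpace α] (μ : SignedMeasure α) (s : Set α)
    (f : α → ℝ) : ℝ := sint μ (s.indicator f)

noncomputable def tvN (d : ℕ) (μ : SignedMeasure (XX d)) : EReal :=
  sSup {r : EReal | ∃ φ : XX d → ℝ, LocalC1 d φ ∧ (∀ x, |φ x| ≤ 1) ∧ r = ((sint μ φ : ℝ) : EReal)}

noncomputable def bvN (d : ℕ) (μ : SignedMeasure (XX d)) : EReal :=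
  sSup {r : EReal | ∃ (i : Site d) (φ : XX d → ℝ), LocalC1 d φ ∧ (∀ x, |φ x| ≤ 1) ∧
    r = ((sint μ (pd d φ i) : ℝ) : EReal)}

def PiecewiseC2Expanding (T : ℝ → ℝ) (lam : ℝ) : Prop :=
  Set.MapsTo T (Set.Icc 0 1) (Set.Icc 0 1) ∧
    ∃ (N : ℕ) (a : ℕ → ℝ), 0 < N ∧ a 0 = 0 ∧ a N = 1 ∧ (∀ j < N, a j < a (j + 1)) ∧
      ∀ j < N, ∃ g : ℝ → ℝ, ContDiffOn ℝ 2 g (Set.Icc (a j) (a (j + 1))) ∧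
        (∀ t ∈ Set.Ioo (a j) (a (j + 1)), T t = g t) ∧
        ∀ t ∈ Set.Icc (a j) (a (j + 1)),
          lam ≤ |derivWithin g (Set.Icc (a j) (a (j + 1))) t|

noncomputable def F0 (d : ℕ) (T : ℝ → ℝ) (x : XX d) : XX d :=
  fun i => Set.projIcc (0:ℝ) 1 zero_le_one (T (x i))

open Classical in
noncomputable def Phi (d : ℕ) (A : Site d → Set ℝ) (x : XX d) : XX d :=
  fun i =>
    if h : ∃ v ∈ VFinset d, (x i : ℝ) ∈ A v ∧ (x (i + v) : ℝ) ∈ A (-v) then x (i + h.choose)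
    else x i

noncomputable def Feps (d : ℕ) (T : ℝ → ℝ) (A : Site d → Set ℝ) : XX d → XX d :=
  Phi d A ∘ F0 d T

open Classical in
noncomputable def PhiDec (d : ℕ) (A : Site d → Set ℝ) (i : Site d) (x : XX d) : XX d :=
  fun k =>
    if (k - i ∈ VFinset d ∨ k - i = 0) ∧ (k - i ∈ VFinset d → (x k : ℝ) ∈ A (-(k - i))) then x k
    else Phi d A x k

def GoodIntervals (d : ℕ) (ε : ℝ) (A : Site d → Set ℝ) : Prop :=
  (∀ v ∈ VFinset d, ∃ a b : ℝ, a < b ∧ b - a = ε ∧ 0 ≤ a ∧ b ≤ 1 ∧ A v = Set.Ioo a b) ∧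
    ∀ v ∈ VFinset d, ∀ w ∈ VFinset d, v ≠ w → Disjoint (A v) (A w)

def SepLB (d : ℕ) (A : Site d → Set ℝ) (ℓ : ℝ) : Prop :=
  0 < ℓ ∧ ∀ v ∈ VFinset d, ∀ w ∈ VFinset d, v ≠ w → ∀ s ∈ A v, ∀ t ∈ A w, ℓ ≤ |s - t|

def Delta (d : ℕ) (A : Site d → Set ℝ) (i v : Site d) : Set (XX d) :=
  {x | (x i : ℝ) ∈ A v ∧ (x (i + v) : ℝ) ∈ A (-v)}

def DeltaU (d : ℕ) (A : Site d → Set ℝ) (i : Site d) : Set (XX d) :=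
  ⋃ v ∈ VFinset d, Delta d A i v

noncomputable def bvNM (d : ℕ) (μ : Measure (XX d)) : EReal :=
  sSup {r : EReal | ∃ (i : Site d) (φ : XX d → ℝ), LocalC1 d φ ∧ (∀ x, |φ x| ≤ 1) ∧
    r = ((∫ x, pd d φ i x ∂μ : ℝ) : EReal)}

noncomputable def l1dist (d : ℕ) (Λ₁ Λ₂ : Finset (Site d)) : ℕ :=
  sInf {m : ℕ | ∃ a ∈ Λ₁, ∃ b ∈ Λ₂, m = ∑ j, (a j - b j).natAbs}

lemma zero_not_mem_VFinset (d : ℕ) : (0 : Site d) ∉ VFinset d := by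
  simp only [VFinset, Finset.mem_union, Finset.mem_image, Finset.mem_univ, true_and]
  rintro (⟨j, hj⟩ | ⟨j, hj⟩)
  · have := congrFun hj j
    simp [Pi.single_eq_same] at this
  · have := congrFun hj j
    simp [Pi.single_eq_same] at this

lemma neg_mem_VFinset {d : ℕ} {v : Site d} (h : v ∈ VFinset d) : -v ∈ VFinset d := by
  simp only [VFinset, Finset.mem_union, Finset.mem_image, Finset.mem_univ, true_and] at h ⊢
  rcases h with ⟨j, hj⟩ | ⟨j, hj⟩
  · exact Or.inr ⟨j, by rw [hj]⟩
  · exact Or.inl ⟨j, by rw [← hj, neg_neg]⟩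

theorem stmt11 (d : ℕ) (hd : 1 ≤ d) (ε : ℝ) (hε : 0 < ε) (A : Site d → Set ℝ)
    (hA : GoodIntervals d ε A) (i : Site d) :
    (∀ x : XX d, PhiDec d A i x i = x i) ∧
    (∀ x y : XX d, (∀ k : Site d, k ≠ i → x k = y k) →
      ∀ k : Site d, k ≠ i → PhiDec d A i x k = PhiDec d A i y k) := by
  constructor
  · intro x
    simp only [PhiDec]
    rw [if_pos]
    exact ⟨Or.inr (sub_self i), fun h => absurd (sub_self i ▸ h) (zero_not_mem_VFinset d)⟩
  · intro x y hxy k hk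
    have hxk : x k = y k := hxy k hk
    simp only [PhiDec]
    have hcond : ((k - i ∈ VFinset d ∨ k - i = 0) ∧
        (k - i ∈ VFinset d → (x k : ℝ) ∈ A (-(k - i)))) ↔
        ((k - i ∈ VFinset d ∨ k - i = 0) ∧
        (k - i ∈ VFinset d → (y k : ℝ) ∈ A (-(k - i)))) := by rw [hxk]
    by_cases hc : (k - i ∈ VFinset d ∨ k - i = 0) ∧
        (k - i ∈ VFinset d → (x k : ℝ) ∈ A (-(k - i)))
    · rw [if_pos hc, if_pos (hcond.mp hc), hxk]
    · rw [if_neg hc, if_neg (fun h => hc (hcond.mpr h))]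
      have hkey : (x k : ℝ) ∉ A (i - k) ∨ (i - k) ∉ VFinset d := by
        by_cases hV : (i - k) ∈ VFinset d
        · left
          have hki : k - i ∈ VFinset d := by
            have := neg_mem_VFinset hV; rwa [neg_sub] at this
          intro hxA
          exact hc ⟨Or.inl hki, fun _ => by rwa [neg_sub]⟩
        · exact Or.inr hV
      have hpred : ∀ v : Site d,
          (v ∈ VFinset d ∧ (x k : ℝ) ∈ A v ∧ ((x (k + v) : ℝ)) ∈ A (-v)) ↔
          (v ∈ VFinset d ∧ (y k : ℝ) ∈ A v ∧ ((y (k + v) : ℝ)) ∈ A (-v)) := by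
        intro v
        by_cases hvi : k + v = i
        · have hv : v = i - k := eq_sub_of_add_eq' hvi
          subst hv
          constructor <;> rintro ⟨h1, h2, h3⟩
          · exact absurd h2 (hkey.resolve_right (not_not_intro h1))
          · exact absurd (by rw [hxk]; exact h2)
              (hkey.resolve_right (not_not_intro h1))
        · rw [hxk, hxy (k + v) hvi]
      simp only [Phi]
      by_cases hex : ∃ v ∈ VFinset d, (x k : ℝ) ∈ A v ∧ ((x (k + v) : ℝ)) ∈ A (-v)
      · have hey : ∃ v ∈ VFinset d, (y k : ℝ) ∈ A v ∧ ((y (k + v) : ℝ)) ∈ A (-v) := by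
          obtain ⟨v, hv, h2, h3⟩ := hex
          obtain ⟨hv', h2', h3'⟩ := (hpred v).mp ⟨hv, h2, h3⟩
          exact ⟨v, hv', h2', h3'⟩
        rw [dif_pos hex, dif_pos hey]
        have hcx := hex.choose_spec
        have hcy := hey.choose_spec
        have heq : hex.choose = hey.choose := by
          by_contra hne
          have hdisj := hA.2 _ hcx.1 _ hcy.1 hne
          exact (Set.disjoint_left.mp hdisj hcx.2.1) (by rw [hxk]; exact hcy.2.1)
        rw [heq]
        have hne : k + hey.choose ≠ i := by
          intro hvi
          have hv : hey.choose = i - k := eq_sub_of_add_eq' hvi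
          rcases hkey with hkey | hkey
          · exact hkey (by rw [hxk, ← hv]; exact hcy.2.1)
          · exact hkey (hv ▸ hcy.1)
        exact hxy (k + hey.choose) hne
      · have hey : ¬ ∃ v ∈ VFinset d, (y k : ℝ) ∈ A v ∧ ((y (k + v) : ℝ)) ∈ A (-v) := by
          rintro ⟨v, hv, h2, h3⟩
          exact hex ⟨v, ((hpred v).mpr ⟨hv, h2, h3⟩).1, ((hpred v).mpr ⟨hv, h2, h3⟩).2⟩
        rw [dif_neg hex, dif_neg hey]
        exact hxk
end

section
/- Let Λ be a finite set, let i ∈ Λ, and let h ∈ L^1([0,1]^Λ). Define g on [0,1] by g(t) = ∫ |h(x)| dx_{k≠i}, integrating out all coordinates except the i-th, evaluated at x_i = t. Then the directional variation of g is bounded by that of |h| in direction i, i.e. sup{∫_0^1 g(t)ψ'(t)dt : ψ ∈ C^1 with |ψ|_∞ ≤ 1} ≤ sup{∫_{[0,1]^Λ} |h|·∂_{x_i}ψ dx : ψ ∈ C^1([0,1]^Λ) with |ψ|_∞ ≤ 1}. -/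
open MeasureTheory Set

lemma pi_fintype_irrel {ι : Type*} {α : ι → Type*} (i1 i2 : Fintype ι)
    [∀ j, MeasurableSpace (α j)] (μ : ∀ j, Measure (α j)) :
    @Measure.pi ι α i1 _ μ = @Measure.pi ι α i2 _ μ := by
  congr 1
  exact Subsingleton.elim _ _

section Aux
variable {Λ : Type*} [Fintype Λ] [DecidableEq Λ]

noncomputable def nu : Measure ℝ := volume.restrict (Icc 0 1)

instance : IsProbabilityMeasure nu := ⟨by simp [nu]⟩

omit [DecidableEq Λ] in
lemma restrict_box_eq :
    volume.restrict (univ.pi fun _ : Λ => Icc (0:ℝ) 1) =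
      Measure.pi fun _ : Λ => nu := by
  refine (Measure.pi_eq fun s hs => ?_).symm
  rw [Measure.restrict_apply (MeasurableSet.univ_pi hs), ← pi_inter_distrib,
    volume_pi_pi]
  simp [nu, Measure.restrict_apply (hs _)]

instance uniqueEqSub (i : Λ) : Unique {j : Λ // j = i} :=
  ⟨⟨⟨i, rfl⟩⟩, fun j => Subtype.ext j.2⟩

/-- insert coordinate `i`. -/
def Tmap (i : Λ) (p : ℝ × ({j : Λ // ¬ j = i} → ℝ)) : Λ → ℝ :=
  fun j => if h : j = i then p.1 else p.2 ⟨j, h⟩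

lemma Tmap_measurePreserving (i : Λ) :
    MeasurePreserving (Tmap i)
      (nu.prod (Measure.pi fun _ : {j : Λ // ¬ j = i} => nu))
      (Measure.pi fun _ : Λ => nu) := by
  have e := (MeasureTheory.measurePreserving_piEquivPiSubtypeProd
    (fun _ : Λ => nu) (· = i)).symm
  have q := (measurePreserving_funUnique nu {j : Λ // j = i}).symm
  have q' : MeasurePreserving (⇑(MeasurableEquiv.funUnique {j : Λ // j = i} ℝ).symm)
      nu (@Measure.pi {j : Λ // j = i} (fun _ => ℝ) (Subtype.fintype fun x => x = i) _
        fun _ => nu) := by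
    rw [pi_fintype_irrel (Subtype.fintype fun x => x = i) Unique.fintype]
    exact q
  have hc := e.comp (q'.prod (MeasurePreserving.id
    (Measure.pi fun _ : {j : Λ // ¬ j = i} => nu)))
  have : ((MeasurableEquiv.piEquivPiSubtypeProd (fun _ : Λ => ℝ) (· = i)).symm ∘
      Prod.map (⇑(MeasurableEquiv.funUnique {j : Λ // j = i} ℝ).symm) id) = Tmap i := by
    funext p
    funext j
    simp [Tmap, MeasurableEquiv.piEquivPiSubtypeProd, MeasurableEquiv.funUnique,
      Equiv.piEquivPiSubtypeProd, Equiv.funUnique]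
  rwa [this] at hc

omit [Fintype Λ] in
lemma Tmap_apply_i (i : Λ) (p : ℝ × ({j : Λ // ¬ j = i} → ℝ)) : Tmap i p i = p.1 := by
  simp [Tmap]

omit [Fintype Λ] in
lemma update_eq_Tmap (i : Λ) (z : Λ → ℝ) (t : ℝ) :
    Function.update z i t = Tmap i (t, fun j => z j.1) := by
  funext j
  rcases eq_or_ne j i with rfl | hj
  · simp [Tmap]
  · simp [Tmap, hj, Function.update_of_ne hj]

lemma proj_measurePreserving (i : Λ) :
    MeasurePreserving (fun z : Λ → ℝ => (fun j : {j : Λ // ¬ j = i} => z j.1))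
      (Measure.pi fun _ : Λ => nu)
      (Measure.pi fun _ : {j : Λ // ¬ j = i} => nu) := by
  have e := MeasureTheory.measurePreserving_piEquivPiSubtypeProd
    (fun _ : Λ => nu) (· = i)
  haveI : IsProbabilityMeasure
      (@Measure.pi {j : Λ // j = i} (fun _ => ℝ) (Subtype.fintype fun x => x = i) _
        fun _ => nu) := by
    rw [pi_fintype_irrel (Subtype.fintype fun x => x = i) Unique.fintype]
    infer_instance
  have hsnd : MeasurePreserving (Prod.snd)
      ((@Measure.pi {j : Λ // j = i} (fun _ => ℝ) (Subtype.fintype fun x => x = i) _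
          fun _ => nu).prod
        (Measure.pi fun _ : {j : Λ // ¬ j = i} => nu))
      (Measure.pi fun _ : {j : Λ // ¬ j = i} => nu) :=
    ⟨measurable_snd, by simp [Measure.map_snd_prod]⟩
  exact hsnd.comp e

lemma key (i : Λ) (h : (Λ → ℝ) → ℝ)
    (hh : IntegrableOn h (univ.pi fun _ : Λ => Icc (0:ℝ) 1) volume)
    (ψ : ℝ → ℝ) (hψ : ContDiff ℝ 1 ψ) :
    (∫ t in Icc (0:ℝ) 1,
        (∫ z in univ.pi fun _ : Λ => Icc (0:ℝ) 1, |h (Function.update z i t)|)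
          * deriv ψ t)
      = ∫ z in univ.pi fun _ : Λ => Icc (0:ℝ) 1, |h z| * deriv ψ (z i) := by
  set μ : Measure (Λ → ℝ) := Measure.pi fun _ : Λ => nu with hμdef
  set π₂ : Measure ({j : Λ // ¬ j = i} → ℝ) := Measure.pi fun _ => nu with hπdef
  have hbox : volume.restrict (univ.pi fun _ : Λ => Icc (0:ℝ) 1) = μ := restrict_box_eq
  have hnu : volume.restrict (Icc (0:ℝ) 1) = nu := rfl
  have hInt : Integrable h μ := by rw [← hbox]; exact hh
  have habs : Integrable (fun z => |h z|) μ := hInt.abs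
  have hT := Tmap_measurePreserving i
  have hS := proj_measurePreserving i
  -- clamp
  set c : ℝ → ℝ := fun t => max 0 (min 1 t) with hcdef
  have hc_mem : ∀ t, c t ∈ Icc (0:ℝ) 1 := fun t =>
    ⟨le_max_left _ _, max_le zero_le_one (min_le_left _ _)⟩
  have hc_eq : ∀ t ∈ Icc (0:ℝ) 1, c t = t := by
    intro t ht
    simp only [hcdef]
    rw [min_eq_right ht.2, max_eq_right ht.1]
  have hdc : Continuous (deriv ψ) := hψ.continuous_deriv le_rfl
  have hcc : Continuous c := continuous_const.max (continuous_const.min continuous_id)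
  set φ : ℝ → ℝ := fun t => deriv ψ (c t) with hφdef
  have hφc : Continuous φ := hdc.comp hcc
  obtain ⟨C, hC⟩ := isCompact_Icc.exists_bound_of_continuousOn
    (f := deriv ψ) hdc.continuousOn
  have hφb : ∀ t, ‖φ t‖ ≤ C := fun t => hC _ (hc_mem t)
  have hφeq : ∀ t ∈ Icc (0:ℝ) 1, φ t = deriv ψ t := by
    intro t ht
    simp only [hφdef]
    rw [hc_eq t ht]
  -- g
  set g : (Λ → ℝ) → ℝ := fun z => |h z| * φ (z i) with hgdef
  have hgInt : Integrable g μ := by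
    have hm : AEStronglyMeasurable (fun z : Λ → ℝ => φ (z i)) μ :=
      (hφc.comp (continuous_apply i)).aestronglyMeasurable
    have := habs.bdd_mul hm (c := C) (Filter.Eventually.of_forall fun x => hφb (x i))
    simpa [hgdef, mul_comm] using this
  have habsT : Integrable (fun w => |h (Tmap i w)|) (nu.prod π₂) := by
    have := (hT.integrable_comp habs.aestronglyMeasurable).mpr habs
    exact this
  have hgT : Integrable (fun w : ℝ × ({j : Λ // ¬ j = i} → ℝ) =>
      |h (Tmap i w)| * φ w.1) (nu.prod π₂) := by
    have hsm2 : AEStronglyMeasurable (fun w : ℝ × ({j : Λ // ¬ j = i} → ℝ) => φ w.1)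
        (nu.prod π₂) := (hφc.comp continuous_fst).aestronglyMeasurable
    have := habsT.bdd_mul hsm2 (c := C) (Filter.Eventually.of_forall fun w => hφb w.1)
    simpa [mul_comm] using this
  -- marginal identification
  have hae : ∀ᵐ t ∂nu,
      (∫ z in univ.pi fun _ : Λ => Icc (0:ℝ) 1, |h (Function.update z i t)|)
        = ∫ y, |h (Tmap i (t, y))| ∂π₂ := by
    filter_upwards [habsT.prod_right_ae] with t ht
    have hsm : AEStronglyMeasurable (fun y => |h (Tmap i (t, y))|) π₂ :=
      ht.aestronglyMeasurable
    have h1 : (∫ z in univ.pi fun _ : Λ => Icc (0:ℝ) 1, |h (Function.update z i t)|)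
        = ∫ z, |h (Tmap i (t, fun j => z j.1))| ∂μ := by
      rw [hbox]
      congr 1
      funext z
      rw [update_eq_Tmap]
    rw [h1]
    have h2 := integral_map (φ := fun z : Λ → ℝ => (fun j : {j : Λ // ¬ j = i} => z j.1))
      hS.measurable.aemeasurable (f := fun y => |h (Tmap i (t, y))|)
      (by rw [hS.map_eq]; exact hsm)
    rw [hS.map_eq] at h2
    exact h2.symm
  -- main chain
  calc (∫ t in Icc (0:ℝ) 1,
        (∫ z in univ.pi fun _ : Λ => Icc (0:ℝ) 1, |h (Function.update z i t)|)
          * deriv ψ t)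
      = ∫ t, (∫ y, |h (Tmap i (t, y))| ∂π₂) * φ t ∂nu := by
        rw [hnu]
        refine integral_congr_ae ?_
        have hmem : ∀ᵐ t ∂nu, t ∈ Icc (0:ℝ) 1 := by
          rw [← hnu]; exact ae_restrict_mem measurableSet_Icc
        filter_upwards [hae, hmem] with t h1 h2
        rw [h1, hφeq t h2]
    _ = ∫ t, ∫ y, |h (Tmap i (t, y))| * φ t ∂π₂ ∂nu := by
        refine integral_congr_ae (Filter.Eventually.of_forall fun t => ?_)
        exact (integral_mul_const (φ t) _).symm
    _ = ∫ w, |h (Tmap i w)| * φ w.1 ∂(nu.prod π₂) := (integral_prod _ hgT).symm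
    _ = ∫ z, g z ∂μ := by
        have hsm3 : AEStronglyMeasurable g (Measure.map (Tmap i) (nu.prod π₂)) := by
          rw [hT.map_eq]; exact hgInt.aestronglyMeasurable
        have := integral_map hT.measurable.aemeasurable hsm3
        rw [hT.map_eq] at this
        rw [this]
        refine integral_congr_ae (Filter.Eventually.of_forall fun w => ?_)
        simp only [hgdef, Tmap_apply_i]
    _ = ∫ z in univ.pi fun _ : Λ => Icc (0:ℝ) 1, |h z| * deriv ψ (z i) := by
        rw [hbox]
        refine integral_congr_ae ?_
        have hmem : ∀ᵐ z ∂μ, z ∈ univ.pi fun _ : Λ => Icc (0:ℝ) 1 := by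
          rw [← hbox]
          exact ae_restrict_mem (MeasurableSet.univ_pi fun _ => measurableSet_Icc)
        filter_upwards [hmem] with z hz
        simp only [hgdef]
        rw [hφeq _ (hz i (mem_univ i))]

end Aux

theorem stmt13 (Λ : Type*) [Fintype Λ] [DecidableEq Λ] (i : Λ) (h : (Λ → ℝ) → ℝ)
    (hh : IntegrableOn h (Set.univ.pi fun _ : Λ => Set.Icc (0:ℝ) 1) volume) :
    sSup {r : EReal | ∃ ψ : ℝ → ℝ, ContDiff ℝ 1 ψ ∧ (∀ t, |ψ t| ≤ 1) ∧
        r = ((∫ t in Set.Icc (0:ℝ) 1,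
          (∫ z in Set.univ.pi fun _ : Λ => Set.Icc (0:ℝ) 1, |h (Function.update z i t)|) *
            deriv ψ t : ℝ) : EReal)} ≤
      sSup {r : EReal | ∃ ψ : (Λ → ℝ) → ℝ, ContDiff ℝ 1 ψ ∧ (∀ z, |ψ z| ≤ 1) ∧
        r = ((∫ z in Set.univ.pi fun _ : Λ => Set.Icc (0:ℝ) 1,
          |h z| * deriv (fun t => ψ (Function.update z i t)) (z i) : ℝ) : EReal)} := by
  apply sSup_le_sSup
  rintro r ⟨ψ, hψ, hb, rfl⟩
  refine ⟨fun z => ψ (z i), hψ.comp (ContinuousLinearMap.proj (R := ℝ)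
    (φ := fun _ : Λ => ℝ) i).contDiff, fun z => hb (z i), ?_⟩
  congr 1
  simp only [Function.update_self]
  exact key i h hh ψ hψ
end

section
/- Let g : [0,1]^2 → [0,∞) be integrable with finite directional variation in the first variable, V_1(g) := sup{∫_{[0,1]^2} g(x,y)·∂_xψ(x,y) dxdy : ψ ∈ C^1([0,1]^2), |ψ|_∞ ≤ 1} < ∞. Then for all Borel sets A, B ⊆ [0,1]: ∫_A ∫_B g(x,y) dy dx ≤ Leb(A)·(∫_{[0,1]^2} g dxdy + V_1(g)). In particular, if A is an interval of length ε and V_1(g) and ∫ g are both bounded by a constant K, then ∫_{A×B} g ≤ 2Kε. -/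
open MeasureTheory Set Metric Filter Topology

lemma oneD (H : ℝ → ℝ) (hH : IntegrableOn H (Icc (0:ℝ) 1))
    (V : ℝ)
    (hV : ∀ φ : ℝ → ℝ, ContDiff ℝ 1 φ → (∀ x, |φ x| ≤ 1) → (∃ C, ∀ x, |deriv φ x| ≤ C) →
      (∫ x in Icc (0:ℝ) 1, H x * deriv φ x) ≤ V)
    (A : Set ℝ) (hA : MeasurableSet A) (hAsub : A ⊆ Icc 0 1) :
    (∫ x in A, H x) ≤ (volume A).toReal * ((∫ x in Icc (0:ℝ) 1, H x) + V) := by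
  rcases eq_or_ne (volume A) 0 with hA0 | hA0
  · rw [Measure.restrict_eq_zero.mpr hA0, integral_zero_measure, hA0]
    simp
  have hAfin : volume A ≠ ⊤ := by
    refine ne_top_of_le_ne_top ?_ (measure_mono hAsub)
    simp [Real.volume_Icc]
  set m : ℝ := (volume A).toReal with hm_def
  have hm : 0 < m := ENNReal.toReal_pos hA0 hAfin
  -- the function w
  set w : ℝ → ℝ := fun t => A.indicator (fun _ => (1:ℝ)) t
      - m * (Ioo (0:ℝ) 1).indicator (fun _ => (1:ℝ)) t with hw_def
  have hw_int : Integrable w volume := by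
    apply Integrable.sub
    · exact (integrable_indicator_iff hA).2 (integrableOn_const hAfin)
    · exact ((integrable_indicator_iff measurableSet_Ioo).2
        (integrableOn_const (by simp [Real.volume_Ioo]))).const_mul m
  have hw_bd : ∀ t, |w t| ≤ 1 + m := by
    intro t
    rw [abs_le]
    constructor <;> by_cases h1 : t ∈ A <;> by_cases h2 : t ∈ Ioo (0:ℝ) 1 <;>
      simp [hw_def, h1, h2] <;> nlinarith [hm.le]
  -- interval integrals of w are between -m and m
  have hkey : ∀ a b : ℝ, a ≤ b → (-m ≤ ∫ t in a..b, w t) ∧ (∫ t in a..b, w t) ≤ m := by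
    intro a b hab
    have h1 : (∫ t in a..b, A.indicator (fun _ => (1:ℝ)) t)
        = (volume (Ioc a b ∩ A)).toReal := by
      rw [intervalIntegral.integral_of_le hab, setIntegral_indicator hA]
      simp
      rfl
    have h2 : (∫ t in a..b, (Ioo (0:ℝ) 1).indicator (fun _ => (1:ℝ)) t)
        = (volume (Ioc a b ∩ Ioo 0 1)).toReal := by
      rw [intervalIntegral.integral_of_le hab, setIntegral_indicator measurableSet_Ioo]
      simp
      rfl
    have hsplit : (∫ t in a..b, w t) = (volume (Ioc a b ∩ A)).toReal
        - m * (volume (Ioc a b ∩ Ioo 0 1)).toReal := by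
      have i1 : IntervalIntegrable (fun t => A.indicator (fun _ => (1:ℝ)) t) volume a b :=
        ((integrable_indicator_iff hA).2
          (integrableOn_const hAfin)).intervalIntegrable
      have i2 : IntervalIntegrable (fun t => m * (Ioo (0:ℝ) 1).indicator (fun _ => (1:ℝ)) t)
          volume a b :=
        (((integrable_indicator_iff measurableSet_Ioo).2
          (integrableOn_const (by simp [Real.volume_Ioo]))).const_mul m).intervalIntegrable
      rw [hw_def]
      rw [intervalIntegral.integral_sub i1 i2, intervalIntegral.integral_const_mul, h1, h2]
    have b1 : (volume (Ioc a b ∩ A)).toReal ≤ m := by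
      apply ENNReal.toReal_mono hAfin
      exact measure_mono inter_subset_right
    have b1' : 0 ≤ (volume (Ioc a b ∩ A)).toReal := ENNReal.toReal_nonneg
    have b2 : (volume (Ioc a b ∩ Ioo 0 1)).toReal ≤ 1 := by
      have : volume (Ioc a b ∩ Ioo 0 1) ≤ volume (Ioo (0:ℝ) 1) :=
        measure_mono inter_subset_right
      have h10 : volume (Ioo (0:ℝ) 1) = 1 := by simp [Real.volume_Ioo]
      calc (volume (Ioc a b ∩ Ioo 0 1)).toReal ≤ (volume (Ioo (0:ℝ) 1)).toReal :=
            ENNReal.toReal_mono (by simp [h10]) this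
        _ = 1 := by simp [h10]
    have b2' : 0 ≤ (volume (Ioc a b ∩ Ioo 0 1)).toReal := ENNReal.toReal_nonneg
    constructor <;> [skip; skip] <;> rw [hsplit] <;> nlinarith
  -- the primitive u of w
  set u : ℝ → ℝ := fun x => ∫ t in (0:ℝ)..x, w t with hu_def
  have hu_cont : Continuous u :=
    intervalIntegral.continuous_primitive (fun a b => hw_int.intervalIntegrable) 0
  have hu_bd : ∀ x, |u x| ≤ m := by
    intro x
    rw [abs_le]
    rcases le_total (0:ℝ) x with hx | hx
    · exact ⟨(hkey 0 x hx).1, (hkey 0 x hx).2⟩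
    · have := hkey x 0 hx
      have hsymm : u x = -∫ t in x..(0:ℝ), w t := intervalIntegral.integral_symm x 0
      constructor <;> rw [hsymm] <;> linarith [this.1, this.2]
  -- the second primitive
  set P : ℝ → ℝ := fun x => ∫ t in (0:ℝ)..x, u t with hP_def
  have hP : ∀ x, HasDerivAt P (u x) x := by
    intro x
    exact intervalIntegral.integral_hasDerivAt_right (hu_cont.intervalIntegrable _ _)
      ⟨univ, univ_mem, hu_cont.aestronglyMeasurable⟩ hu_cont.continuousAt
  -- u (x+δ) - u (x-δ) = ∫_{x-δ..x+δ} w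
  have hu_int : ∀ x δ : ℝ, u (x + δ) - u (x - δ) = ∫ t in (x-δ)..(x+δ), w t := by
    intro x δ
    rw [hu_def]
    have := intervalIntegral.integral_add_adjacent_intervals
      (a := (0:ℝ)) (b := x - δ) (c := x + δ) (f := w) (μ := volume)
      hw_int.intervalIntegrable hw_int.intervalIntegrable
    simp only []
    linarith [this]
  -- the main inequality for each positive δ
  have hmain : ∀ δ : ℝ, 0 < δ →
      (∫ x in Icc (0:ℝ) 1, H x * ((u (x + δ) - u (x - δ)) / (2 * δ * m))) ≤ V := by
    intro δ hδ
    set φ : ℝ → ℝ := fun x => (P (x + δ) - P (x - δ)) / (2 * δ * m) with hφ_def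
    have hden : (0:ℝ) < 2 * δ * m := by positivity
    have hφd : ∀ x, HasDerivAt φ ((u (x + δ) - u (x - δ)) / (2 * δ * m)) x := by
      intro x
      exact (((hP (x + δ)).comp_add_const x δ).sub
        ((hP (x - δ)).comp_sub_const x δ)).div_const _
    have hderiv_eq : deriv φ = fun x => (u (x + δ) - u (x - δ)) / (2 * δ * m) :=
      funext fun x => (hφd x).deriv
    have hφC1 : ContDiff ℝ 1 φ := by
      rw [contDiff_one_iff_deriv]
      refine ⟨fun x => (hφd x).differentiableAt, ?_⟩
      rw [hderiv_eq]
      exact (((hu_cont.comp (continuous_id.add continuous_const)).sub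
        (hu_cont.comp (continuous_id.sub continuous_const))).div_const _)
    have hφbd : ∀ x, |φ x| ≤ 1 := by
      intro x
      have hPP : P (x + δ) - P (x - δ) = ∫ t in (x-δ)..(x+δ), u t := by
        have := intervalIntegral.integral_add_adjacent_intervals
          (a := (0:ℝ)) (b := x - δ) (c := x + δ) (f := u) (μ := volume)
          (hu_cont.intervalIntegrable _ _) (hu_cont.intervalIntegrable _ _)
        simp only [hP_def]
        linarith [this]
      have hbnd : |∫ t in (x-δ)..(x+δ), u t| ≤ m * |(x+δ) - (x-δ)| := by
        have := intervalIntegral.norm_integral_le_of_norm_le_const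
          (a := x-δ) (b := x+δ) (C := m) (f := u) (fun t _ => by
            rw [Real.norm_eq_abs]; exact hu_bd t)
        rwa [Real.norm_eq_abs] at this
      have habs : |(x+δ) - (x-δ)| = 2 * δ := by
        rw [abs_of_nonneg] <;> linarith
      rw [hφ_def]
      simp only []
      rw [abs_div, abs_of_pos hden, div_le_one hden, hPP]
      calc |∫ t in (x-δ)..(x+δ), u t| ≤ m * (2*δ) := by rw [← habs]; exact hbnd
        _ = 2 * δ * m := by ring
    have hCbd : ∃ C, ∀ x, |deriv φ x| ≤ C := by
      refine ⟨(m + m) / (2 * δ * m), fun x => ?_⟩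
      rw [hderiv_eq]
      simp only []
      rw [abs_div, abs_of_pos hden]
      gcongr
      exact (abs_sub _ _).trans (by linarith [hu_bd (x+δ), hu_bd (x-δ)])
    have := hV φ hφC1 hφbd hCbd
    calc (∫ x in Icc (0:ℝ) 1, H x * ((u (x + δ) - u (x - δ)) / (2 * δ * m)))
        = ∫ x in Icc (0:ℝ) 1, H x * deriv φ x := by rw [hderiv_eq]
      _ ≤ V := this
  -- choose a sequence of δ's tending to 0
  set δs : ℕ → ℝ := fun n => 1 / (n + 1) with hδs_def
  have hδpos : ∀ n, 0 < δs n := fun n => by positivity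
  have hδlim : Tendsto δs atTop (nhdsWithin 0 (Ioi 0)) := by
    apply tendsto_nhdsWithin_of_tendsto_nhds_of_eventually_within
    · exact tendsto_one_div_add_atTop_nhds_zero_nat
    · exact Eventually.of_forall fun n => hδpos n
  -- Lebesgue differentiation
  have hld : ∀ᵐ x : ℝ, Tendsto
      (fun n => (∫ t in (x - δs n)..(x + δs n), w t) / (2 * δs n)) atTop (𝓝 (w x)) := by
    have h0 := IsUnifLocDoublingMeasure.ae_tendsto_average (μ := (volume : Measure ℝ))
      hw_int.locallyIntegrable 1
    filter_upwards [h0] with x hx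
    have hx2 := hx (fun _ : ℕ => x) δs hδlim (Eventually.of_forall fun n => by
      simp only [mem_closedBall, dist_self, one_mul]
      exact (hδpos n).le)
    refine hx2.congr fun n => ?_
    rw [setAverage_eq, Real.closedBall_eq_Icc, Real.volume_real_Icc]
    have h2δ : x + δs n - (x - δs n) = 2 * δs n := by ring
    rw [h2δ, max_eq_left (by positivity)]
    rw [integral_Icc_eq_integral_Ioc, ← intervalIntegral.integral_of_le (by linarith [hδpos n])]
    rw [smul_eq_mul, inv_mul_eq_div]
  -- dominated convergence
  have hdom : Tendsto
      (fun n => ∫ x in Icc (0:ℝ) 1, H x * ((u (x + δs n) - u (x - δs n)) / (2 * δs n * m)))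
      atTop (𝓝 (∫ x in Icc (0:ℝ) 1, H x * (w x / m))) := by
    apply tendsto_integral_of_dominated_convergence (bound := fun x => |H x| * ((1 + m) / m))
    · intro n
      exact hH.aestronglyMeasurable.mul
        ((((hu_cont.comp (continuous_id.add continuous_const)).sub
          (hu_cont.comp (continuous_id.sub continuous_const))).div_const _).aestronglyMeasurable)
    · exact hH.abs.mul_const _
    · intro n
      refine Eventually.of_forall fun x => ?_
      rw [Real.norm_eq_abs, abs_mul]
      have hden : (0:ℝ) < 2 * δs n * m := by have := hδpos n; positivity
      have hI : |∫ t in (x - δs n)..(x + δs n), w t| ≤ (1 + m) * (2 * δs n) := by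
        have h3 := intervalIntegral.norm_integral_le_of_norm_le_const (C := 1 + m) (f := w)
          (a := x - δs n) (b := x + δs n) (fun t _ => by rw [Real.norm_eq_abs]; exact hw_bd t)
        rw [Real.norm_eq_abs] at h3
        calc |∫ t in (x - δs n)..(x + δs n), w t|
            ≤ (1 + m) * |x + δs n - (x - δs n)| := h3
          _ = (1 + m) * (2 * δs n) := by
              rw [show x + δs n - (x - δs n) = 2 * δs n by ring,
                abs_of_nonneg (by linarith [hδpos n])]
      refine mul_le_mul_of_nonneg_left ?_ (abs_nonneg _)
      calc |(u (x + δs n) - u (x - δs n)) / (2 * δs n * m)|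
          = |∫ t in (x - δs n)..(x + δs n), w t| / (2 * δs n * m) := by
            rw [hu_int, abs_div, abs_of_pos hden]
        _ ≤ ((1 + m) * (2 * δs n)) / (2 * δs n * m) := by gcongr
        _ = (1 + m) / m := by
            rw [div_eq_div_iff hden.ne' hm.ne']
            ring
    · filter_upwards [ae_restrict_of_ae hld] with x hx
      refine Tendsto.congr (fun n => ?_) ((hx.div_const m).const_mul (H x))
      rw [hu_int]
      ring
  have hfinal_le : (∫ x in Icc (0:ℝ) 1, H x * (w x / m)) ≤ V :=
    le_of_tendsto hdom (Eventually.of_forall fun n => hmain (δs n) (hδpos n))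
  -- identify the limit integral
  have hptw : ∀ x, H x * (w x / m)
      = (A.indicator H x - m * (Ioo (0:ℝ) 1).indicator H x) / m := by
    intro x
    by_cases h1 : x ∈ A <;> by_cases h2 : x ∈ Ioo (0:ℝ) 1 <;>
      simp only [hw_def, Set.indicator_of_mem, Set.indicator_of_notMem, h1, h2, not_false_eq_true] <;>
      field_simp <;> ring
  have hIccIoo : (∫ x in Icc (0:ℝ) 1, H x) = ∫ x in Ioo (0:ℝ) 1, H x := by
    rw [integral_Icc_eq_integral_Ioc, integral_Ioc_eq_integral_Ioo]
  have hsum : (∫ x in Icc (0:ℝ) 1, H x * (w x / m))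
      = ((∫ x in A, H x) - m * ∫ x in Icc (0:ℝ) 1, H x) / m := by
    rw [show (fun x => H x * (w x / m))
        = fun x => (A.indicator H x - m * (Ioo (0:ℝ) 1).indicator H x) / m from funext hptw]
    rw [integral_div]
    congr 1
    rw [integral_sub (hH.indicator hA) ((hH.indicator measurableSet_Ioo).const_mul m)]
    rw [MeasureTheory.integral_const_mul]
    rw [setIntegral_indicator hA, setIntegral_indicator measurableSet_Ioo]
    rw [inter_eq_self_of_subset_right hAsub,
      inter_eq_self_of_subset_right Ioo_subset_Icc_self, ← hIccIoo]
  rw [hsum, div_le_iff₀ hm] at hfinal_le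
  nlinarith [hfinal_le]

theorem stmt14 (g : ℝ × ℝ → ℝ) (hmeas : Measurable g) (hpos : ∀ p, 0 ≤ g p)
    (hint : IntegrableOn g (Set.Icc (0:ℝ) 1 ×ˢ Set.Icc (0:ℝ) 1) volume)
    (Vg : ℝ)
    (hV : ∀ ψ : ℝ × ℝ → ℝ, ContDiff ℝ 1 ψ → (∀ p, |ψ p| ≤ 1) →
      (∫ p in Set.Icc (0:ℝ) 1 ×ˢ Set.Icc (0:ℝ) 1, g p * deriv (fun s => ψ (s, p.2)) p.1) ≤ Vg) :
    (∀ A B : Set ℝ, MeasurableSet A → MeasurableSet B → A ⊆ Set.Icc 0 1 → B ⊆ Set.Icc 0 1 →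
      (∫ x in A, ∫ y in B, g (x, y)) ≤
        (volume A).toReal * ((∫ p in Set.Icc (0:ℝ) 1 ×ˢ Set.Icc (0:ℝ) 1, g p) + Vg)) ∧
    (∀ (K ε a b : ℝ) (B : Set ℝ), MeasurableSet B → B ⊆ Set.Icc 0 1 → a ≤ b → b - a = ε →
      Set.Ioo a b ⊆ Set.Icc 0 1 → Vg ≤ K →
      (∫ p in Set.Icc (0:ℝ) 1 ×ˢ Set.Icc (0:ℝ) 1, g p) ≤ K →
      (∫ p in Set.Ioo a b ×ˢ B, g p) ≤ 2 * K * ε) := by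
  set μ1 : Measure ℝ := volume.restrict (Icc (0:ℝ) 1) with hμ1_def
  have hprod : (volume : Measure (ℝ×ℝ)).restrict (Icc (0:ℝ) 1 ×ˢ Icc (0:ℝ) 1) = μ1.prod μ1 := by
    rw [hμ1_def, Measure.prod_restrict, ← Measure.volume_eq_prod]
  have hgint : Integrable g (μ1.prod μ1) := by rwa [IntegrableOn, hprod] at hint
  set H : ℝ → ℝ := fun x => ∫ y in Icc (0:ℝ) 1, g (x, y) with hH_def
  have hHint : IntegrableOn H (Icc (0:ℝ) 1) := hgint.integral_prod_left
  have hIeq : (∫ p in Icc (0:ℝ) 1 ×ˢ Icc (0:ℝ) 1, g p) = ∫ x in Icc (0:ℝ) 1, H x := by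
    rw [hprod]
    exact integral_prod g hgint
  -- reduce hV to a 1D statement
  have hVred : ∀ φ : ℝ → ℝ, ContDiff ℝ 1 φ → (∀ x, |φ x| ≤ 1) →
      (∃ C, ∀ x, |deriv φ x| ≤ C) →
      (∫ x in Icc (0:ℝ) 1, H x * deriv φ x) ≤ Vg := by
    intro φ hφ hφbd ⟨C, hC⟩
    have h1 := hV (fun p => φ p.1) (hφ.comp contDiff_fst) (fun p => hφbd p.1)
    have h2 : (∫ p in Icc (0:ℝ) 1 ×ˢ Icc (0:ℝ) 1, g p * deriv φ p.1)
        = ∫ x in Icc (0:ℝ) 1, H x * deriv φ x := by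
      rw [hprod]
      have hint2 : Integrable (fun p : ℝ × ℝ => g p * deriv φ p.1) (μ1.prod μ1) := by
        have := hgint.bdd_mul
          (((hφ.continuous_deriv le_rfl).comp continuous_fst).aestronglyMeasurable)
          (Eventually.of_forall fun p => by rw [Real.norm_eq_abs]; exact hC p.1)
        exact this.congr (Eventually.of_forall fun p => by simp only [Function.comp_apply]; ring)
      rw [integral_prod _ hint2]
      congr 1
      funext x
      rw [hH_def]
      exact integral_mul_const (deriv φ x) fun y => g (x, y)
    calc (∫ x in Icc (0:ℝ) 1, H x * deriv φ x)
        = ∫ p in Icc (0:ℝ) 1 ×ˢ Icc (0:ℝ) 1, g p * deriv φ p.1 := h2.symm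
      _ ≤ Vg := h1
  have hcore := fun (A : Set ℝ) hA hAsub => oneD H hHint Vg hVred A hA hAsub
  have hmain1 : ∀ A B : Set ℝ, MeasurableSet A → MeasurableSet B → A ⊆ Set.Icc 0 1 →
      B ⊆ Set.Icc 0 1 →
      (∫ x in A, ∫ y in B, g (x, y)) ≤
        (volume A).toReal * ((∫ p in Set.Icc (0:ℝ) 1 ×ˢ Set.Icc (0:ℝ) 1, g p) + Vg) := by
    intro A B hA hB hAsub hBsub
    have hle_ae : ∀ᵐ x ∂(volume.restrict A), (∫ y in B, g (x, y)) ≤ H x := by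
      have hae1 : ∀ᵐ x ∂μ1, IntegrableOn (fun y => g (x, y)) (Icc (0:ℝ) 1) :=
        hgint.prod_right_ae
      have hmono : (volume.restrict A) ≪ μ1 :=
        Measure.absolutelyContinuous_of_le (Measure.restrict_mono hAsub le_rfl)
      filter_upwards [hmono.ae_le hae1] with x hx
      exact setIntegral_mono_set hx (Eventually.of_forall fun y => hpos _)
        (HasSubset.Subset.eventuallyLE hBsub)
    have hG_aesm : AEStronglyMeasurable (fun x => ∫ y in B, g (x, y)) (volume.restrict A) :=
      (hmeas.stronglyMeasurable.integral_prod_right' (ν := volume.restrict B)).aestronglyMeasurable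
    have hHA : IntegrableOn H A := hHint.mono_set hAsub
    have hG_int : IntegrableOn (fun x => ∫ y in B, g (x, y)) A := by
      refine hHA.mono' hG_aesm ?_
      filter_upwards [hle_ae] with x hx
      rw [Real.norm_eq_abs, abs_of_nonneg (integral_nonneg fun y => hpos _)]
      exact hx
    have step1 : (∫ x in A, ∫ y in B, g (x, y)) ≤ ∫ x in A, H x :=
      integral_mono_ae hG_int hHA hle_ae
    calc (∫ x in A, ∫ y in B, g (x, y)) ≤ ∫ x in A, H x := step1
      _ ≤ (volume A).toReal * ((∫ x in Icc (0:ℝ) 1, H x) + Vg) := hcore A hA hAsub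
      _ = (volume A).toReal * ((∫ p in Set.Icc (0:ℝ) 1 ×ˢ Set.Icc (0:ℝ) 1, g p) + Vg) := by
          rw [hIeq]
  refine ⟨hmain1, ?_⟩
  intro K ε a b B hB hBsub hab hba hIoosub hVK hIK
  have hprod2 : (volume : Measure (ℝ×ℝ)).restrict (Ioo a b ×ˢ B)
      = (volume.restrict (Ioo a b)).prod (volume.restrict B) := by
    rw [Measure.prod_restrict, ← Measure.volume_eq_prod]
  have hgint2 : Integrable g ((volume.restrict (Ioo a b)).prod (volume.restrict B)) := by
    rw [← hprod2]
    exact hint.mono_set (prod_mono hIoosub hBsub)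
  have heq2 : (∫ p in Ioo a b ×ˢ B, g p) = ∫ x in Ioo a b, ∫ y in B, g (x, y) := by
    rw [hprod2]
    exact integral_prod g hgint2
  have hεpos : 0 ≤ ε := by linarith
  have hvol : (volume (Ioo a b)).toReal = ε := by
    rw [Real.volume_Ioo, ENNReal.toReal_ofReal (by linarith)]
    exact hba
  calc (∫ p in Ioo a b ×ˢ B, g p) = ∫ x in Ioo a b, ∫ y in B, g (x, y) := heq2
    _ ≤ (volume (Ioo a b)).toReal * ((∫ p in Set.Icc (0:ℝ) 1 ×ˢ Set.Icc (0:ℝ) 1, g p) + Vg) :=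
        hmain1 (Ioo a b) B measurableSet_Ioo hB hIoosub hBsub
    _ ≤ ε * (K + K) := by
        rw [hvol]
        exact mul_le_mul_of_nonneg_left (by linarith) hεpos
    _ = 2 * K * ε := by ring
end
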